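/- Let A, B, D, E, Z, W, P, Â, B̂, D̂, Ê, Ŵ, K, Q, R̃, L₁, L₂, F, F̂ be real matrices of compatible sizes satisfying D = Z W, A P = P Â − B Q, F P = F̂, E = P Ê + B (L₂ − L₁), and P D̂ = Z Ŵ. Let φ : ℝ × ℝ^l → ℝ^l be any function, and fix t ∈ ℝ, x ∈ ℝⁿ, x̂ ∈ ℝ^{n̂}, û ∈ ℝ^{m̂}, w ∈ ℝ^p, ŵ ∈ ℝ^{p̂}. Define the interface input u = K (x − P x̂) + Q x̂ + R̃ û + L₁ φ(t, F x) − L₂ φ(t, F̂ x̂). Then A x + B u + E φ(t, F x) + D w − P ( Â x̂ + B̂ û + Ê φ(t, F̂ x̂) + D̂ ŵ ) = (A + B K)(x − P x̂) + Z (W w − Ŵ ŵ) + (B R̃ − P B̂) û + (B L₁ + E) (φ(t, F x) − φ(t, F̂ x̂)). -/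
import Mathlib


open Matrix

/-- Algebraic error-dynamics identity for the interface input
`u = K (x − P x̂) + Q x̂ + R̃ û + L₁ φ(t,Fx) − L₂ φ(t,F̂x̂)`. -/
theorem stmt_15 {n m p l nh mh ph p' : ℕ}
    (A : Matrix (Fin n) (Fin n) ℝ) (B : Matrix (Fin n) (Fin m) ℝ)
    (D : Matrix (Fin n) (Fin p) ℝ) (E : Matrix (Fin n) (Fin l) ℝ)
    (Z : Matrix (Fin n) (Fin p') ℝ) (W : Matrix (Fin p') (Fin p) ℝ)
    (P : Matrix (Fin n) (Fin nh) ℝ) (Ahat : Matrix (Fin nh) (Fin nh) ℝ)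
    (Bhat : Matrix (Fin nh) (Fin mh) ℝ) (Dhat : Matrix (Fin nh) (Fin ph) ℝ)
    (Ehat : Matrix (Fin nh) (Fin l) ℝ) (What : Matrix (Fin p') (Fin ph) ℝ)
    (K : Matrix (Fin m) (Fin n) ℝ) (Q : Matrix (Fin m) (Fin nh) ℝ)
    (Rt : Matrix (Fin m) (Fin mh) ℝ) (L1 L2 : Matrix (Fin m) (Fin l) ℝ)
    (F : Matrix (Fin l) (Fin n) ℝ) (Fhat : Matrix (Fin l) (Fin nh) ℝ)
    (hD : D = Z * W) (hA : A * P = P * Ahat - B * Q) (hF : F * P = Fhat)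
    (hE : E = P * Ehat + B * (L2 - L1)) (hDhat : P * Dhat = Z * What)
    (φ : ℝ → (Fin l → ℝ) → (Fin l → ℝ))
    (t : ℝ) (x : Fin n → ℝ) (xhat : Fin nh → ℝ) (uhat : Fin mh → ℝ)
    (w : Fin p → ℝ) (what : Fin ph → ℝ) :
    A.mulVec x +
        B.mulVec (K.mulVec (x - P.mulVec xhat) + Q.mulVec xhat + Rt.mulVec uhat +
          L1.mulVec (φ t (F.mulVec x)) - L2.mulVec (φ t (Fhat.mulVec xhat))) +
        E.mulVec (φ t (F.mulVec x)) + D.mulVec w -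
        P.mulVec (Ahat.mulVec xhat + Bhat.mulVec uhat +
          Ehat.mulVec (φ t (Fhat.mulVec xhat)) + Dhat.mulVec what) =
      (A + B * K).mulVec (x - P.mulVec xhat) +
        Z.mulVec (W.mulVec w - What.mulVec what) +
        (B * Rt - P * Bhat).mulVec uhat +
        (B * L1 + E).mulVec (φ t (F.mulVec x) - φ t (Fhat.mulVec xhat)) := by
  subst hD hE
  simp only [Matrix.mulVec_add, Matrix.mulVec_sub, Matrix.add_mulVec, Matrix.sub_mulVec,
    Matrix.mulVec_mulVec, Matrix.add_mul, Matrix.sub_mul, Matrix.mul_add, Matrix.mul_sub,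
    Matrix.mul_assoc, hA, hDhat]
  abel
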